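/- Let (X,τ,d) be an extended metric-topological space and let x,y ∈ X satisfy d(x,y) < ∞. Then there exists f ∈ LIP_{b,1}(X,τ,d) such that f(x) − f(y) = d(x,y); in other words, the supremum in the τ-recovery property of d is attained for points at finite distance. -/

import Mathlib

open scoped ENNReal

universe u v w

/-- An extended pseudodistance on `X`. -/
structure IsExtPseudoDist {X : Type*} (d : X → X → ℝ≥0∞) : Prop where
  refl : ∀ x, d x x = 0
  symm : ∀ x y, d x y = d y x
  triangle : ∀ x y z, d x y ≤ d x z + d z y

/-- An extended distance on `X`. -/
structure IsExtDist {X : Type*} (d : X → X → ℝ≥0∞) : Prop where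
  eq_zero_iff : ∀ x y, d x y = 0 ↔ x = y
  symm : ∀ x y, d x y = d y x
  triangle : ∀ x y z, d x y ≤ d x z + d z y

/-- `LIP_{b,1}(X,τ,d)`: bounded `τ`-continuous functions `f : X → ℝ` with
`|f x - f y| ≤ d x y`. -/
def Lip1 {X : Type*} (τ : TopologicalSpace X) (d : X → X → ℝ≥0∞) : Set (X → ℝ) :=
  {f | @Continuous X ℝ τ _ f ∧ (∃ C : ℝ, ∀ x, |f x| ≤ C) ∧
    ∀ x y, ENNReal.ofReal |f x - f y| ≤ d x y}

/-- `(X,τ,d)` is an extended metric-topological space. -/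
def IsEMT {X : Type*} (τ : TopologicalSpace X) (d : X → X → ℝ≥0∞) : Prop :=
  IsExtDist d ∧
  τ = (⨅ f ∈ Lip1 τ d, TopologicalSpace.induced f inferInstance) ∧
  (∀ x y, d x y = ⨆ f ∈ Lip1 τ d, ENNReal.ofReal |f x - f y|)

/-- A continuous-short map between (pre-)extended (pseudo)metric-topological spaces. -/
def ContinuousShort {X Y : Type*} (τX : TopologicalSpace X) (dX : X → X → ℝ≥0∞)
    (τY : TopologicalSpace Y) (dY : Y → Y → ℝ≥0∞) (φ : X → Y) : Prop :=
  @Continuous X Y τX τY φ ∧ ∀ x y, dY (φ x) (φ y) ≤ dX x y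

private lemma trunc_lip (D a b : ℝ) : |min D (max 0 a) - min D (max 0 b)| ≤ |a - b| := by
  have h1 : |min D (max 0 a) - min D (max 0 b)| ≤ |max 0 a - max 0 b| := by
    refine le_trans (abs_min_sub_min_le_max D (max 0 a) D (max 0 b)) ?_
    rw [sub_self, abs_zero]
    exact max_le (abs_nonneg _) le_rfl
  have h2 : |max 0 a - max 0 b| ≤ |a - b| := by
    refine le_trans (abs_max_sub_max_le_max 0 a 0 b) ?_
    rw [sub_self, abs_zero]
    exact max_le (abs_nonneg _) le_rfl
  exact h1.trans h2

/-- Approximate attainment with truncated, normalized functions. -/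
private lemma emt_approx {X : Type u} (τ : TopologicalSpace X) (d : X → X → ℝ≥0∞)
    (h : IsEMT τ d) (x y : X) (hxy : d x y < ⊤) (ε : ℝ) (hε : 0 < ε) :
    ∃ g ∈ Lip1 τ d, g y = 0 ∧ (∀ z, 0 ≤ g z ∧ g z ≤ (d x y).toReal) ∧
      (d x y).toReal - ε ≤ g x := by
  letI := τ
  set D : ℝ := (d x y).toReal with hD
  have hD0 : 0 ≤ D := ENNReal.toReal_nonneg
  by_cases hcase : D ≤ ε
  · refine ⟨fun _ => 0, ⟨continuous_const, ⟨0, fun z => by simp⟩, fun z w => by simp⟩,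
      rfl, fun z => ⟨le_refl 0, hD0⟩, by show D - ε ≤ 0; linarith⟩
  push_neg at hcase
  -- get f ∈ Lip1 with D - ε < |f x - f y|
  have hrec := h.2.2 x y
  have hlt : ENNReal.ofReal (D - ε) < d x y := by
    rw [ENNReal.ofReal_lt_iff_lt_toReal (by linarith) hxy.ne]
    linarith
  rw [hrec] at hlt
  rw [lt_iSup_iff] at hlt
  obtain ⟨f, hf⟩ := hlt
  rw [lt_iSup_iff] at hf
  obtain ⟨hfL, hf⟩ := hf
  have hf' : D - ε < |f x - f y| := by
    rwa [ENNReal.ofReal_lt_ofReal_iff_of_nonneg (by linarith)] at hf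
  -- replace f by f or -f so that the difference is nonneg
  obtain ⟨f, hfL, hf'⟩ : ∃ f ∈ Lip1 τ d, D - ε < f x - f y := by
    rcases le_total (f y) (f x) with hle | hle
    · exact ⟨f, hfL, by rwa [abs_of_nonneg (by linarith)] at hf'⟩
    · refine ⟨fun z => -f z, ⟨hfL.1.neg, ?_, fun z w => ?_⟩, ?_⟩
      · obtain ⟨C, hC⟩ := hfL.2.1
        exact ⟨C, fun z => by simpa [abs_neg] using hC z⟩
      · have := hfL.2.2 z w
        have heq : |-f z - -f w| = |f z - f w| := by rw [← abs_neg]; ring_nf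
        rwa [heq]
      · rw [abs_of_nonpos (by linarith)] at hf'
        show D - ε < -f x - -f y
        linarith
  refine ⟨fun z => min D (max 0 (f z - f y)), ⟨?_, ⟨D, fun z => ?_⟩, fun z w => ?_⟩,
      ?_, fun z => ⟨?_, ?_⟩, ?_⟩
  · exact (continuous_const.min ((continuous_const.max
      (hfL.1.sub continuous_const))))
  · have h0 : 0 ≤ min D (max 0 (f z - f y)) := le_min hD0 (le_max_left 0 _)
    rw [abs_of_nonneg h0]; exact min_le_left _ _
  · refine le_trans (ENNReal.ofReal_le_ofReal ?_) (hfL.2.2 z w)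
    calc |min D (max 0 (f z - f y)) - min D (max 0 (f w - f y))|
        ≤ |(f z - f y) - (f w - f y)| := trunc_lip D _ _
      _ = |f z - f w| := by ring_nf
  · simp [hD0]
  · exact le_min hD0 (le_max_left 0 _)
  · exact min_le_left _ _
  · have : D - ε ≤ min D (f x - f y) := le_min (by linarith) (le_of_lt hf')
    calc D - ε ≤ min D (f x - f y) := this
      _ ≤ min D (max 0 (f x - f y)) := min_le_min (le_refl D) (le_max_right 0 _)

/-- Combining step: `max f (min g (f + c))` stays in the admissible class. -/
private lemma emt_combine {X : Type u} (τ : TopologicalSpace X) (d : X → X → ℝ≥0∞)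
    (x y : X) (D c : ℝ) (hD0 : 0 ≤ D) (hc : 0 ≤ c)
    (f g : X → ℝ) (hfL : f ∈ Lip1 τ d) (hgL : g ∈ Lip1 τ d)
    (hfy : f y = 0) (hgy : g y = 0)
    (hfI : ∀ z, 0 ≤ f z ∧ f z ≤ D) (hgI : ∀ z, 0 ≤ g z ∧ g z ≤ D) :
    (fun z => max (f z) (min (g z) (f z + c))) ∈ Lip1 τ d ∧
      (fun z => max (f z) (min (g z) (f z + c))) y = 0 ∧
      (∀ z, 0 ≤ max (f z) (min (g z) (f z + c)) ∧ max (f z) (min (g z) (f z + c)) ≤ D) ∧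
      (∀ z, f z ≤ max (f z) (min (g z) (f z + c)) ∧
        max (f z) (min (g z) (f z + c)) ≤ f z + c) := by
  letI := τ
  refine ⟨⟨?_, ⟨D + c, fun z => ?_⟩, fun z w => ?_⟩, ?_, fun z => ⟨?_, ?_⟩, fun z => ⟨?_, ?_⟩⟩
  · exact hfL.1.max ((hgL.1.min (hfL.1.add continuous_const)))
  · have h1 : 0 ≤ max (f z) (min (g z) (f z + c)) := le_max_of_le_left (hfI z).1
    have h2 : max (f z) (min (g z) (f z + c)) ≤ D + c :=
      max_le (by linarith [(hfI z).2]) (le_trans (min_le_left _ _) (by linarith [(hgI z).2]))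
    rw [abs_of_nonneg h1]; exact h2
  · have hmm : |min (g z) (f z + c) - min (g w) (f w + c)| ≤ max |g z - g w| |f z - f w| := by
      have h0 := abs_min_sub_min_le_max (g z) (f z + c) (g w) (f w + c)
      rwa [show f z + c - (f w + c) = f z - f w from by ring] at h0
    have habs : |max (f z) (min (g z) (f z + c)) - max (f w) (min (g w) (f w + c))| ≤
        max |g z - g w| |f z - f w| := by
      refine le_trans (abs_max_sub_max_le_max _ _ _ _) ?_
      exact max_le (le_max_right _ _) hmm
    refine le_trans (ENNReal.ofReal_le_ofReal habs) ?_
    rcases le_total |g z - g w| |f z - f w| with h' | h'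
    · rw [max_eq_right h']; exact hfL.2.2 z w
    · rw [max_eq_left h']; exact hgL.2.2 z w
  · simp [hfy, hgy, hc]
  · exact le_max_of_le_left (hfI z).1
  · exact max_le (hfI z).2 (le_trans (min_le_left _ _) (hgI z).2)
  · exact le_max_left _ _
  · exact max_le (by linarith) (min_le_right _ _)

open Filter
theorem emt_recovery_attained {X : Type u} (τ : TopologicalSpace X) (d : X → X → ℝ≥0∞)
    (h : IsEMT τ d) (x y : X) (hxy : d x y < ⊤) :
    ∃ f ∈ Lip1 τ d, f x - f y = (d x y).toReal := by
  letI := τ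
  set D : ℝ := (d x y).toReal with hD
  have hD0 : 0 ≤ D := ENNReal.toReal_nonneg
  have hhalf : (0:ℝ) < 2⁻¹ := by norm_num
  have hex : ∀ n : ℕ, ∃ g, g ∈ Lip1 τ d ∧ g y = 0 ∧ (∀ z, 0 ≤ g z ∧ g z ≤ D) ∧
      D - (2:ℝ)⁻¹ ^ n ≤ g x := fun n =>
    emt_approx τ d h x y hxy ((2:ℝ)⁻¹ ^ n) (pow_pos hhalf n)
  choose G hGL hGy hGI hGx using hex
  let F : ℕ → X → ℝ := fun n => Nat.rec (G 0)
    (fun n Fn => fun z => max (Fn z) (min (G (n+1) z) (Fn z + (2:ℝ)⁻¹ ^ n))) n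
  have hFsucc : ∀ n, F (n+1) =
      fun z => max (F n z) (min (G (n+1) z) (F n z + (2:ℝ)⁻¹ ^ n)) := fun n => rfl
  have hinv : ∀ n, F n ∈ Lip1 τ d ∧ F n y = 0 ∧ (∀ z, 0 ≤ F n z ∧ F n z ≤ D) := by
    intro n
    induction n with
    | zero => exact ⟨hGL 0, hGy 0, hGI 0⟩
    | succ n ih =>
      obtain ⟨h1, h2, h3, _⟩ := emt_combine τ d x y D ((2:ℝ)⁻¹ ^ n) hD0
        (le_of_lt (pow_pos hhalf n)) (F n) (G (n+1)) ih.1 (hGL _) ih.2.1 (hGy _)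
        ih.2.2 (hGI _)
      exact ⟨h1, h2, h3⟩
  have hstep : ∀ n z, F n z ≤ F (n+1) z ∧ F (n+1) z ≤ F n z + (2:ℝ)⁻¹ ^ n := by
    intro n z
    obtain ⟨_, _, _, h4⟩ := emt_combine τ d x y D ((2:ℝ)⁻¹ ^ n) hD0
      (le_of_lt (pow_pos hhalf n)) (F n) (G (n+1)) (hinv n).1 (hGL _) (hinv n).2.1 (hGy _)
      (hinv n).2.2 (hGI _)
    exact h4 z
  have hFx : ∀ n, D - (2:ℝ)⁻¹ ^ n ≤ F n x := by
    intro n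
    induction n with
    | zero => exact hGx 0
    | succ n ih =>
      have h1 : D - (2:ℝ)⁻¹ ^ (n+1) ≤ G (n+1) x := hGx (n+1)
      have hp : (0:ℝ) < (2:ℝ)⁻¹ ^ (n+1) := pow_pos hhalf (n+1)
      have h2 : D - (2:ℝ)⁻¹ ^ (n+1) ≤ F n x + (2:ℝ)⁻¹ ^ n := by linarith
      calc D - (2:ℝ)⁻¹ ^ (n+1) ≤ min (G (n+1) x) (F n x + (2:ℝ)⁻¹ ^ n) := le_min h1 h2
        _ ≤ F (n+1) x := by rw [hFsucc n]; exact le_max_right _ _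
  have hmono : ∀ z, Monotone (fun n => F n z) :=
    fun z => monotone_nat_of_le_succ (fun n => (hstep n z).1)
  have hbdd : ∀ z, BddAbove (Set.range fun n => F n z) := by
    intro z
    refine ⟨D, ?_⟩
    rintro _ ⟨n, rfl⟩
    exact ((hinv n).2.2 z).2
  set f : X → ℝ := fun z => ⨆ n, F n z with hf
  have htend : ∀ z, Tendsto (fun n => F n z) atTop (nhds (f z)) :=
    fun z => tendsto_atTop_ciSup (hmono z) (hbdd z)
  have hFle : ∀ n z, F n z ≤ f z := fun n z => le_ciSup (hbdd z) n
  have hgap : ∀ n z, f z ≤ F n z + 2 * (2:ℝ)⁻¹ ^ n := by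
    intro n z
    have key : ∀ j, F (n+j) z ≤ F n z + 2 * (2:ℝ)⁻¹ ^ n - 2 * (2:ℝ)⁻¹ ^ (n+j) := by
      intro j
      induction j with
      | zero => simp
      | succ j ih =>
        have h1 := (hstep (n+j) z).2
        have h2 : (2:ℝ)⁻¹ ^ (n+(j+1)) = (2:ℝ)⁻¹ ^ (n+j) * 2⁻¹ := pow_succ _ _
        have h3 : F (n + (j+1)) z = F ((n+j) + 1) z := by ring_nf
        rw [h3, h2]
        linarith
    refine ciSup_le fun m => ?_
    rcases le_total m n with hmn | hmn
    · have h1 := hmono z hmn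
      have h2 : (0:ℝ) < (2:ℝ)⁻¹ ^ n := pow_pos hhalf n
      simp only at h1
      linarith
    · obtain ⟨j, rfl⟩ := Nat.exists_eq_add_of_le hmn
      have h1 := key j
      have h2 : (0:ℝ) < (2:ℝ)⁻¹ ^ (n+j) := pow_pos hhalf (n+j)
      linarith
  have hfxD : f x = D := by
    refine le_antisymm (ciSup_le fun n => ((hinv n).2.2 x).2) ?_
    refine le_of_forall_pos_le_add ?_
    intro ε hε
    obtain ⟨n, hn⟩ := exists_pow_lt_of_lt_one hε (by norm_num : (2:ℝ)⁻¹ < 1)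
    have h1 := hFx n
    have h2 := hFle n x
    have h3 : f x ≤ f x := le_refl _
    simp only [hf] at h2 ⊢
    linarith
  have hfy0 : f y = 0 := by
    have hzero : ∀ n, F n y = 0 := fun n => (hinv n).2.1
    have : f y = ⨆ n, F n y := rfl
    rw [this]
    simp [hzero]
  have hunif : TendstoUniformly (fun n z => F n z) f atTop := by
    rw [Metric.tendstoUniformly_iff]
    intro ε hε
    obtain ⟨n0, hn0⟩ := exists_pow_lt_of_lt_one (by linarith : (0:ℝ) < ε/4)
      (by norm_num : (2:ℝ)⁻¹ < 1)
    filter_upwards [Filter.eventually_ge_atTop n0] with n hn z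
    have h1 : F n z ≤ f z := hFle n z
    have h2 : f z ≤ F n z + 2 * (2:ℝ)⁻¹ ^ n := hgap n z
    have h3 : (2:ℝ)⁻¹ ^ n ≤ (2:ℝ)⁻¹ ^ n0 :=
      pow_le_pow_of_le_one (le_of_lt hhalf) (by norm_num) hn
    rw [Real.dist_eq, abs_of_nonneg (by linarith)]
    linarith
  have hfcont : Continuous f :=
    hunif.continuous (Filter.Eventually.of_forall fun n => (hinv n).1.1).frequently
  have hflip : ∀ z w, ENNReal.ofReal |f z - f w| ≤ d z w := by
    intro z w
    by_cases hzw : d z w = ⊤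
    · rw [hzw]; exact le_top
    · rw [ENNReal.ofReal_le_iff_le_toReal hzw]
      have hlim : Tendsto (fun n => |F n z - F n w|) atTop (nhds |f z - f w|) :=
        ((htend z).sub (htend w)).abs
      refine le_of_tendsto hlim (Filter.Eventually.of_forall fun n => ?_)
      have hn := (hinv n).1.2.2 z w
      rwa [ENNReal.ofReal_le_iff_le_toReal hzw] at hn
  refine ⟨f, ⟨hfcont, ⟨D, fun z => ?_⟩, hflip⟩, ?_⟩
  · have h1 : 0 ≤ f z := le_trans ((hinv 0).2.2 z).1 (hFle 0 z)
    rw [abs_of_nonneg h1]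
    exact ciSup_le fun n => ((hinv n).2.2 z).2
  · rw [hfxD, hfy0, sub_zero]
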